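/- With notation as above, the Poincaré series J(t) = Σ jₙ tⁿ of the kernel J of the derivation d on ℚ[x₁, x₂, ...] satisfies J(t) = (1 - t)·A(t) + t, where A(t) = ∏_{k≥1} 1/(1 - t^k) is the generating function of partitions; equivalently J(t) = ∏_{k≥2} 1/(1 - t^k) + t. -/

import Mathlib

open MvPolynomial

/-- The derivation `d` on `A = ℚ[x₁, x₂, …]` (with `X i` standing for `x_{i+1}`)
determined by `d x₁ = 0` and `d xₙ = x_{n-1}` for `n ≥ 2`. -/
noncomputable def dDer : Derivation ℚ (MvPolynomial ℕ ℚ) (MvPolynomial ℕ ℚ) :=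
  MvPolynomial.mkDerivation ℚ (fun i => if i = 0 then 0 else X (i - 1))

/-- The degree-`n` graded piece `Aₙ` of `A` (where `xₙ = X (n-1)` has degree `n`). -/
noncomputable def Apiece (n : ℕ) : Submodule ℚ (MvPolynomial ℕ ℚ) :=
  weightedHomogeneousSubmodule ℚ (fun i : ℕ => i + 1) n

/-- The degree-`n` graded piece `Jₙ` of `J = ker d`. -/
noncomputable def Jpiece (n : ℕ) : Submodule ℚ (MvPolynomial ℕ ℚ) :=
  Apiece n ⊓ LinearMap.ker dDer.toLinearMap

/-- `jₙ = dim_ℚ Jₙ`. -/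
noncomputable def jDim (n : ℕ) : ℕ := Module.finrank ℚ (Jpiece n)



abbrev W : ℕ → ℕ := fun i => i + 1


lemma weight_single (i m : ℕ) : Finsupp.weight W (Finsupp.single i m) = m * (i+1) := by
  simp [Finsupp.weight_apply, Finsupp.sum_single_index, mul_comm]

lemma sum_map_succ (u : ℕ →₀ ℕ) :
    ((Finsupp.toMultiset u).map (· + 1)).sum = Finsupp.weight W u := by
  induction u using Finsupp.induction with
  | zero => simp
  | single_add a b f ha hb ih =>
    rw [Finsupp.toMultiset_add, Multiset.map_add, Multiset.sum_add, ih, map_add,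
      Finsupp.toMultiset_single, weight_single]
    simp [Multiset.nsmul_singleton, Multiset.sum_replicate, mul_comm]

lemma map_sub_add (p : Multiset ℕ) (hp : ∀ x ∈ p, 0 < x) :
    (p.map (· - 1)).map (· + 1) = p := by
  rw [Multiset.map_map]
  conv_rhs => rw [← Multiset.map_id p]
  exact Multiset.map_congr rfl fun x hx => by have := hp x hx; simp; omega

noncomputable def partEquiv (n : ℕ) :
    {d : ℕ →₀ ℕ // Finsupp.weight W d = n} ≃ Nat.Partition n where
  toFun d := ⟨(Finsupp.toMultiset d.1).map (· + 1), by
      intro i hi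
      simp only [Multiset.mem_map] at hi
      obtain ⟨a, -, rfl⟩ := hi
      omega, by rw [sum_map_succ, d.2]⟩
  invFun p := ⟨Multiset.toFinsupp (p.parts.map (· - 1)), by
      rw [← sum_map_succ, Multiset.toFinsupp_toMultiset, map_sub_add _ (fun x hx => p.parts_pos hx), p.parts_sum]⟩
  left_inv d := by
    ext : 1
    show Multiset.toFinsupp (((Finsupp.toMultiset d.1).map (· + 1)).map (· - 1)) = d.1
    have : ((Finsupp.toMultiset d.1).map (· + 1)).map (· - 1) = Finsupp.toMultiset d.1 := by
      rw [Multiset.map_map]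
      conv_rhs => rw [← Multiset.map_id (Finsupp.toMultiset d.1)]
      exact Multiset.map_congr rfl fun x hx => by simp
    rw [this, Finsupp.toMultiset_toFinsupp]
  right_inv p := by
    ext : 1
    simp only [Multiset.toFinsupp_toMultiset]
    exact map_sub_add _ (fun x hx => p.parts_pos hx)



lemma sub_single_add {s : ℕ →₀ ℕ} {i : ℕ} (hi : s i ≠ 0) :
    s - Finsupp.single i 1 + Finsupp.single i 1 = s := by
  ext j
  simp only [Finsupp.add_apply, Finsupp.tsub_apply, Finsupp.single_apply]
  by_cases h : i = j
  · subst h; simp; omega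
  · simp [h]

lemma weight_step {s : ℕ →₀ ℕ} {i n : ℕ} (hi : s i ≠ 0) (h0 : i ≠ 0)
    (hw : Finsupp.weight W s = n) :
    Finsupp.weight W (s - Finsupp.single i 1 + Finsupp.single (i-1) 1) = n - 1 ∧ 1 ≤ n := by
  have h1 : Finsupp.weight W (s - Finsupp.single i 1) + (i + 1) = n := by
    have := congrArg (Finsupp.weight W) (sub_single_add hi)
    rw [map_add, weight_single, hw] at this
    omega
  have h2 : Finsupp.weight W (s - Finsupp.single i 1 + Finsupp.single (i-1) 1)
      = Finsupp.weight W (s - Finsupp.single i 1) + i := by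
    rw [map_add, weight_single]; omega
  omega

lemma dDer_monomial (s : ℕ →₀ ℕ) (r : ℚ) :
    dDer (monomial s r) = r • s.sum (fun i k => if i = 0 then 0 else
      (k : ℚ) • monomial (s - Finsupp.single i 1 + Finsupp.single (i-1) 1) 1) := by
  rw [dDer, mkDerivation_monomial]
  congr 1
  apply Finsupp.sum_congr
  intro i _
  by_cases h : i = 0
  · simp [h]
  · simp only [h, if_false]
    rw [smul_eq_mul, X, monomial_mul, mul_one]
    rw [smul_monomial, smul_eq_mul, mul_one]

lemma dDer_mem {n : ℕ} {p : MvPolynomial ℕ ℚ} (hp : p ∈ Apiece n) :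
    dDer p ∈ Apiece (n - 1) := by
  have hrw : dDer p = ∑ v ∈ p.support, dDer (monomial v (coeff v p)) := by
    conv_lhs => rw [← p.support_sum_monomial_coeff]
    rw [map_sum]
  rw [hrw]
  apply Submodule.sum_mem
  intro v hv
  have hw : Finsupp.weight W v = n := hp (mem_support_iff.mp hv)
  rw [dDer_monomial]
  apply Submodule.smul_mem
  rw [Finsupp.sum]
  apply Submodule.sum_mem
  intro i hi
  by_cases h : i = 0
  · simp [h, Submodule.zero_mem]
  · simp only [h, if_false]
    apply Submodule.smul_mem
    rw [Apiece, mem_weightedHomogeneousSubmodule]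
    exact isWeightedHomogeneous_monomial _ _ _
      (weight_step (Finsupp.mem_support_iff.mp hi) h hw).1

noncomputable instance instFt (n : ℕ) : Fintype {d : ℕ →₀ ℕ // Finsupp.weight W d = n} :=
  Fintype.ofEquiv _ (partEquiv n).symm

noncomputable def apieceEquiv (n : ℕ) :
    Apiece n ≃ₗ[ℚ] ({d : ℕ →₀ ℕ | Finsupp.weight W d = n} →₀ ℚ) :=
  (LinearEquiv.ofEq _ _ (by
    rw [Apiece, weightedHomogeneousSubmodule_eq_finsupp_supported])).trans
    (AddMonoidAlgebra.supportedEquivFinsupp _)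

noncomputable instance instFt' (n : ℕ) : Fintype {d : ℕ →₀ ℕ | Finsupp.weight W d = n} :=
  instFt n

instance (n : ℕ) : FiniteDimensional ℚ (Apiece n) :=
  Module.Finite.equiv (apieceEquiv n).symm

lemma finrank_apiece (n : ℕ) :
    Module.finrank ℚ (Apiece n) = Fintype.card (Nat.Partition n) := by
  rw [(apieceEquiv n).finrank_eq, Module.finrank_finsupp_self]
  exact Fintype.card_congr (partEquiv n)

lemma monomial_mem_apiece {u : ℕ →₀ ℕ} {n : ℕ} (h : Finsupp.weight W u = n) :
    (monomial u (1:ℚ)) ∈ Apiece n :=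
  isWeightedHomogeneous_monomial _ _ _ h

lemma key_step (N : ℕ) (hN : 1 ≤ N) :
    ∀ m : ℕ, ∀ u : ℕ →₀ ℕ, Finsupp.weight W u = N →
      N - u.support.sup id ≤ m →
      (monomial u (1:ℚ)) ∈ (Apiece (N+1)).map dDer.toLinearMap := by
  intro m
  induction m with
  | zero =>
    intro u hw hm
    exfalso
    have hu : u ≠ 0 := by
      rintro rfl; simp at hw; omega
    obtain ⟨t, ht, hsup⟩ := Finset.exists_mem_eq_sup u.support
      (Finsupp.support_nonempty_iff.mpr hu) id
    have hut : u t ≠ 0 := Finsupp.mem_support_iff.mp ht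
    have h1 : W t ≤ Finsupp.weight W u := Finsupp.le_weight_of_ne_zero' W hut
    simp only [W] at h1
    rw [hw] at h1
    rw [hsup] at hm
    simp only [id_eq] at hm
    omega
  | succ m ih =>
    intro u hw hm
    have hu : u ≠ 0 := by
      rintro rfl; simp at hw; omega
    obtain ⟨t, ht, hsup⟩ := Finset.exists_mem_eq_sup u.support
      (Finsupp.support_nonempty_iff.mpr hu) id
    have htmax : ∀ j ∈ u.support, j ≤ t := fun j hj => by
      have := Finset.le_sup (f := id) hj; rw [hsup] at this; exact this
    have hut : u t ≠ 0 := Finsupp.mem_support_iff.mp ht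
    set u₀ : ℕ →₀ ℕ := u - Finsupp.single t 1 with hu₀
    have hu₀add : u₀ + Finsupp.single t 1 = u := sub_single_add hut
    have hu₀t1 : u₀ (t+1) = 0 := by
      have h1 : u (t+1) = 0 := by
        by_contra h
        have := htmax (t+1) (Finsupp.mem_support_iff.mpr h); omega
      have h2 : u₀ (t+1) + (Finsupp.single t 1 : ℕ →₀ ℕ) (t+1) = u (t+1) := by
        rw [← Finsupp.add_apply, hu₀add]
      rw [Finsupp.single_apply, if_neg (by omega : ¬ t = t+1)] at h2
      omega
    set p : ℕ →₀ ℕ := u₀ + Finsupp.single (t+1) 1 with hp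
    have hpt1 : p (t+1) = 1 := by
      simp [hp, Finsupp.add_apply, hu₀t1]
    have hwu₀ : Finsupp.weight W u₀ + (t+1) = N := by
      have h := congrArg (Finsupp.weight W) hu₀add
      rw [map_add, weight_single, one_mul, hw] at h
      exact h
    have hwp : Finsupp.weight W p = N + 1 := by
      rw [hp, map_add, weight_single, one_mul]
      omega
    have hdisj : Disjoint u₀.support (Finsupp.single (t+1) 1).support := by
      rw [Finsupp.support_single_ne_zero _ (by norm_num)]
      simp [Finset.disjoint_singleton_right, Finsupp.mem_support_iff, hu₀t1]
    have hsupp_p : p.support = insert (t+1) u₀.support := by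
      rw [hp, Finsupp.support_add_eq hdisj,
        Finsupp.support_single_ne_zero _ (by norm_num)]
      rw [Finset.union_comm, ← Finset.insert_eq]
    have ht1notin : (t+1) ∉ u₀.support := by
      simp [Finsupp.mem_support_iff, hu₀t1]
    -- the sum expansion
    have hsub : p - Finsupp.single (t+1) 1 = u₀ := by
      rw [hp]; exact add_tsub_cancel_right _ _
    have hder : dDer (monomial p 1) = monomial u 1 +
        ∑ i ∈ u₀.support, (if i = 0 then 0 else
          (p i : ℚ) • monomial (p - Finsupp.single i 1 + Finsupp.single (i-1) 1) 1) := by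
      rw [dDer_monomial, one_smul, Finsupp.sum, hsupp_p, Finset.sum_insert ht1notin]
      congr 1
      rw [if_neg (by omega : ¬ t + 1 = 0), hpt1, Nat.cast_one, one_smul, hsub]
      rw [show t + 1 - 1 = t from rfl, hu₀add]
    set r : MvPolynomial ℕ ℚ := ∑ i ∈ u₀.support, (if i = 0 then 0 else
          (p i : ℚ) • monomial (p - Finsupp.single i 1 + Finsupp.single (i-1) 1) 1) with hr
    have hmonp : (monomial p (1:ℚ)) ∈ Apiece (N+1) := monomial_mem_apiece hwp
    have hd : dDer (monomial p 1) ∈ (Apiece (N+1)).map dDer.toLinearMap :=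
      ⟨monomial p 1, hmonp, rfl⟩
    have hrA : r ∈ Apiece N := by
      have h1 : dDer (monomial p 1) ∈ Apiece N := by
        have := dDer_mem hmonp
        simpa using this
      have h2 : (monomial u (1:ℚ)) ∈ Apiece N := monomial_mem_apiece hw
      have h3 : r = dDer (monomial p 1) - monomial u 1 := by
        rw [hder]; ring
      rw [h3]
      exact Submodule.sub_mem _ h1 h2
    have hisupp : ∀ i ∈ u₀.support, i ≤ t := by
      intro i hi
      apply htmax
      rw [Finsupp.mem_support_iff] at hi ⊢
      intro h
      apply hi
      rw [hu₀]
      simp only [Finsupp.tsub_apply, h]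
      omega
    have hcoeff : ∀ v : ℕ →₀ ℕ, coeff v r ≠ 0 → v (t+1) ≠ 0 := by
      intro v hv hv0
      apply hv
      rw [hr, coeff_sum]
      apply Finset.sum_eq_zero
      intro i hi
      by_cases h0 : i = 0
      · simp [h0]
      · simp only [h0, if_false]
        have hile : i ≤ t := hisupp i hi
        have he : ((p - Finsupp.single i 1 + Finsupp.single (i-1) 1) : ℕ →₀ ℕ) (t+1) = 1 := by
          simp only [Finsupp.add_apply, Finsupp.tsub_apply, Finsupp.single_apply]
          rw [if_neg (by omega : ¬ i = t+1), if_neg (by omega : ¬ i - 1 = t+1)]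
          omega
        have hne : (p - Finsupp.single i 1 + Finsupp.single (i-1) 1) ≠ v := by
          intro h; rw [h] at he; omega
        rw [coeff_smul, coeff_monomial, if_neg hne, smul_zero]
    have hrmem : r ∈ (Apiece (N+1)).map dDer.toLinearMap := by
      rw [← r.support_sum_monomial_coeff]
      apply Submodule.sum_mem
      intro v hv
      have hcv : coeff v r ≠ 0 := mem_support_iff.mp hv
      have hwv : Finsupp.weight W v = N := hrA hcv
      have hvt1 : (t+1) ∈ v.support := Finsupp.mem_support_iff.mpr (hcoeff v hcv)
      have hsupv : t + 1 ≤ v.support.sup id := Finset.le_sup (f := id) hvt1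
      have hmv : N - v.support.sup id ≤ m := by
        rw [hsup] at hm
        simp only [id_eq] at hm
        omega
      have : monomial v (coeff v r) = (coeff v r) • monomial v 1 := by
        rw [smul_monomial, smul_eq_mul, mul_one]
      rw [this]
      exact Submodule.smul_mem _ _ (ih v hwv hmv)
    have hfin : monomial u (1:ℚ) = dDer (monomial p 1) - r := by
      rw [hder]; ring
    rw [hfin]
    exact Submodule.sub_mem _ hd hrmem

lemma map_eq (N : ℕ) (hN : 1 ≤ N) :
    (Apiece (N+1)).map dDer.toLinearMap = Apiece N := by
  apply le_antisymm
  · rintro _ ⟨q, hq, rfl⟩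
    simpa using dDer_mem hq
  · intro q hq
    rw [← q.support_sum_monomial_coeff]
    apply Submodule.sum_mem
    intro v hv
    have hwv : Finsupp.weight W v = N := hq (mem_support_iff.mp hv)
    have : monomial v (coeff v q) = (coeff v q) • monomial v 1 := by
      rw [smul_monomial, smul_eq_mul, mul_one]
    rw [this]
    exact Submodule.smul_mem _ _ (key_step N hN _ v hwv le_rfl)

lemma card_eq (n : ℕ) (hn : 2 ≤ n) :
    Fintype.card (Nat.Partition n) = Fintype.card (Nat.Partition (n-1)) + jDim n := by
  set D := dDer.toLinearMap.domRestrict (Apiece n) with hD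
  have h1 : Module.finrank ℚ (LinearMap.range D) + Module.finrank ℚ (LinearMap.ker D)
      = Module.finrank ℚ (Apiece n) := LinearMap.finrank_range_add_finrank_ker D
  have h2 : LinearMap.range D = (Apiece n).map dDer.toLinearMap := by
    rw [hD, LinearMap.range_domRestrict]
  have h3 : Module.finrank ℚ (LinearMap.range D) = Fintype.card (Nat.Partition (n-1)) := by
    rw [h2]
    have : (Apiece n).map dDer.toLinearMap = Apiece (n-1) := by
      have := map_eq (n-1) (by omega)
      rwa [show n - 1 + 1 = n by omega] at this
    rw [this, finrank_apiece]
  have h4 : Module.finrank ℚ (LinearMap.ker D) = jDim n := by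
    rw [hD, LinearMap.ker_domRestrict]
    rw [jDim, ← Submodule.finrank_map_subtype_eq (Apiece n), Submodule.map_comap_subtype]
    rfl
  rw [h3, h4, finrank_apiece] at h1
  omega

lemma dDer_zero_low {n : ℕ} (hn : n ≤ 1) {p : MvPolynomial ℕ ℚ} (hp : p ∈ Apiece n) :
    dDer p = 0 := by
  have hrw : dDer p = ∑ v ∈ p.support, dDer (monomial v (coeff v p)) := by
    conv_lhs => rw [← p.support_sum_monomial_coeff]
    rw [map_sum]
  rw [hrw]
  apply Finset.sum_eq_zero
  intro v hv
  have hwv : Finsupp.weight W v = n := hp (mem_support_iff.mp hv)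
  rw [dDer_monomial]
  rw [Finsupp.sum]
  rw [Finset.sum_eq_zero, smul_zero]
  intro i hi
  have h1 : W i ≤ Finsupp.weight W v := Finsupp.le_weight_of_ne_zero' W (Finsupp.mem_support_iff.mp hi)
  simp only [W] at h1
  rw [hwv] at h1
  rw [if_pos (by omega)]

lemma jdim_low {n : ℕ} (hn : n ≤ 1) : jDim n = Fintype.card (Nat.Partition n) := by
  have : Jpiece n = Apiece n := by
    rw [Jpiece, inf_eq_left]
    intro p hp
    exact LinearMap.mem_ker.mpr (dDer_zero_low hn hp)
  rw [jDim, this, finrank_apiece]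

theorem stmt_2 :
    PowerSeries.mk (fun n => (jDim n : ℚ)) =
      (1 - PowerSeries.X) * PowerSeries.mk (fun n => (Fintype.card (Nat.Partition n) : ℚ))
        + PowerSeries.X := by
  ext n
  rw [PowerSeries.coeff_mk, map_add, sub_mul, one_mul, map_sub, PowerSeries.coeff_mk,
    PowerSeries.coeff_X]
  match n with
  | 0 =>
    simp only [if_neg (by omega : ¬ (0:ℕ) = 1), add_zero]
    rw [show (PowerSeries.coeff 0) (PowerSeries.X * PowerSeries.mk
      (fun n => (Fintype.card (Nat.Partition n) : ℚ))) = 0 by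
        simp [PowerSeries.coeff_zero_eq_constantCoeff]]
    rw [jdim_low (by omega)]
    ring
  | 1 =>
    rw [PowerSeries.coeff_succ_X_mul, PowerSeries.coeff_mk, if_pos rfl]
    rw [jdim_low (by omega)]
    have h0 : (Fintype.card (Nat.Partition 0) : ℚ) = 1 := by
      rw [Fintype.card_unique]; norm_num
    rw [h0]
    ring
  | (k+2) =>
    rw [PowerSeries.coeff_succ_X_mul, PowerSeries.coeff_mk,
      if_neg (by omega : ¬ k + 2 = 1), add_zero]
    have := card_eq (k+2) (by omega)
    rw [show k + 2 - 1 = k + 1 by omega] at this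
    rw [this]
    push_cast
    ring
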